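/- For s = 0,…,3^k−1, the assignment x ↦ [[0,ζ₃²],[−ζ₃,0]], y ↦ [[ζ₃²,1],[ζ₃²,−ζ₃²]], z ↦ ζ_{3^k}^s·[[0,ζ₃],[−ζ₃²,−1]] extends to a group homomorphism ϱ_s : P'_{8·3^k} → GL(2,ℂ), i.e., the matrices satisfy the relations X² = (XY)² = Y², ZXZ⁻¹ = Y, ZYZ⁻¹ = XY, Z^{3^k} = I. -/

import Mathlib

noncomputable section

open Matrix

/-- ζ_n = e^{2πi/n}. -/
def zeta (n : ℕ) : ℂ := Complex.exp (2 * Real.pi * Complex.I / n)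

/-- ϱ_s(x). -/
def Xm : Matrix (Fin 2) (Fin 2) ℂ := !![0, zeta 3 ^ 2; -zeta 3, 0]

/-- ϱ_s(y). -/
def Ym : Matrix (Fin 2) (Fin 2) ℂ := !![zeta 3 ^ 2, 1; zeta 3 ^ 2, -(zeta 3 ^ 2)]

/-- ϱ_s(z). -/
def Zm (k s : ℕ) : Matrix (Fin 2) (Fin 2) ℂ :=
  zeta (3 ^ k) ^ s • !![0, zeta 3; -(zeta 3 ^ 2), -1]

lemma zeta_pow_self {n : ℕ} (hn : n ≠ 0) : zeta n ^ n = 1 := by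
  rw [zeta, ← Complex.exp_nat_mul]
  rw [mul_div_assoc']
  rw [mul_div_cancel_left₀ _ (by exact_mod_cast hn : (n : ℂ) ≠ 0)]
  exact Complex.exp_two_pi_mul_I

lemma zeta3_cube : zeta 3 ^ 3 = 1 := zeta_pow_self (by norm_num)

lemma zeta3_ne_one : zeta 3 ≠ 1 := by
  intro h
  rw [zeta, Complex.exp_eq_one_iff] at h
  obtain ⟨m, hm⟩ := h
  have h2 : (2 * Real.pi * Complex.I : ℂ) ≠ 0 := by
    simp [Real.pi_ne_zero, Complex.I_ne_zero]
  field_simp at hm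
  have h3 : (1 : ℂ) * (2 * Real.pi * Complex.I) = ((3 * m : ℤ) : ℂ) * (2 * Real.pi * Complex.I) := by
    push_cast
    linear_combination (2 * Real.pi * Complex.I) * hm
  have h4 : (1 : ℂ) = ((3 * m : ℤ) : ℂ) := mul_right_cancel₀ h2 h3
  have : (1 : ℤ) = 3 * m := by exact_mod_cast h4
  omega

lemma zeta3_sum : zeta 3 ^ 2 + zeta 3 + 1 = 0 := by
  have h : (zeta 3 - 1) * (zeta 3 ^ 2 + zeta 3 + 1) = 0 := by
    linear_combination zeta3_cube
  rcases mul_eq_zero.1 h with h' | h'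
  · exact absurd (sub_eq_zero.1 h') zeta3_ne_one
  · exact h'

/-- The matrices defining ϱ_s satisfy the relations of P'_{8·3^k}. -/
theorem stmt11 (k s : ℕ) (hk : 2 ≤ k) (hs : s < 3 ^ k) :
    Xm ^ 2 = (Xm * Ym) ^ 2 ∧ (Xm * Ym) ^ 2 = Ym ^ 2 ∧
    Zm k s * Xm * (Zm k s)⁻¹ = Ym ∧ Zm k s * Ym * (Zm k s)⁻¹ = Xm * Ym ∧
    Zm k s ^ 3 ^ k = 1 := by
  have h3 := zeta3_cube
  have hsum := zeta3_sum
  set c : ℂ := zeta (3 ^ k) ^ s with hc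
  have hcn : c ≠ 0 := pow_ne_zero _ (Complex.exp_ne_zero _)
  have hdet : IsUnit (Zm k s).det := by
    have h : (Zm k s).det = c ^ 2 * (zeta 3 ^ 3) := by
      simp [Zm, det_fin_two, Matrix.smul_apply]
      ring
    rw [h, h3, mul_one]
    exact (isUnit_iff_ne_zero).2 (pow_ne_zero _ hcn)
  refine ⟨?_, ?_, ?_, ?_, ?_⟩
  · ext i j
    fin_cases i <;> fin_cases j
    · simp [Xm, Ym, pow_two, Matrix.mul_apply, Fin.sum_univ_two, -mul_eq_zero]
      linear_combination (-zeta 3^6 + zeta 3^4 - zeta 3^3) * hsum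
    · simp [Xm, Ym, pow_two, Matrix.mul_apply, Fin.sum_univ_two, -mul_eq_zero]
      linear_combination (zeta 3^6 - zeta 3^5) * hsum
    · simp [Xm, Ym, pow_two, Matrix.mul_apply, Fin.sum_univ_two, -mul_eq_zero]
      linear_combination (zeta 3^5 - zeta 3^4) * hsum
    · simp [Xm, Ym, pow_two, Matrix.mul_apply, Fin.sum_univ_two, -mul_eq_zero]
      linear_combination (-zeta 3^5 + zeta 3^4 - zeta 3^2) * hsum
  · ext i j
    fin_cases i <;> fin_cases j
    · simp [Xm, Ym, pow_two, Matrix.mul_apply, Fin.sum_univ_two, -mul_eq_zero]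
      linear_combination (zeta 3^6 - zeta 3^4 + zeta 3^3 - zeta 3^2) * hsum
    · simp [Xm, Ym, pow_two, Matrix.mul_apply, Fin.sum_univ_two, -mul_eq_zero]
      linear_combination (-zeta 3^6 + zeta 3^5) * hsum
    · simp [Xm, Ym, pow_two, Matrix.mul_apply, Fin.sum_univ_two, -mul_eq_zero]
      linear_combination (-zeta 3^5 + zeta 3^4) * hsum
    · simp [Xm, Ym, pow_two, Matrix.mul_apply, Fin.sum_univ_two, -mul_eq_zero]
      linear_combination (zeta 3^5 - zeta 3^4) * hsum
  · have key : Zm k s * Xm = Ym * Zm k s := by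
      ext i j
      fin_cases i <;> fin_cases j
      · simp [Xm, Ym, Zm, Matrix.mul_apply, Fin.sum_univ_two, Matrix.smul_apply, -mul_eq_zero]
        linear_combination ((0:ℂ)) * hsum
      · simp [Xm, Ym, Zm, Matrix.mul_apply, Fin.sum_univ_two, Matrix.smul_apply, -mul_eq_zero]
        linear_combination (c*(-zeta 3 + 1)) * hsum
      · simp [Xm, Ym, Zm, Matrix.mul_apply, Fin.sum_univ_two, Matrix.smul_apply, -mul_eq_zero]
        linear_combination (c*(-zeta 3^2 + zeta 3)) * hsum
      · simp [Xm, Ym, Zm, Matrix.mul_apply, Fin.sum_univ_two, Matrix.smul_apply, -mul_eq_zero]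
        linear_combination (c*(-zeta 3^2)) * hsum
    rw [key, mul_nonsing_inv_cancel_right _ _ hdet]
  · have key : Zm k s * Ym = (Xm * Ym) * Zm k s := by
      ext i j
      fin_cases i <;> fin_cases j
      · simp [Xm, Ym, Zm, Matrix.mul_apply, Fin.sum_univ_two, Matrix.smul_apply, -mul_eq_zero]
        linear_combination (c*(-zeta 3^4 + zeta 3^3)) * hsum
      · simp [Xm, Ym, Zm, Matrix.mul_apply, Fin.sum_univ_two, Matrix.smul_apply, -mul_eq_zero]
        linear_combination (c*(-zeta 3^3)) * hsum
      · simp [Xm, Ym, Zm, Matrix.mul_apply, Fin.sum_univ_two, Matrix.smul_apply, -mul_eq_zero]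
        linear_combination (c*(-zeta 3^2)) * hsum
      · simp [Xm, Ym, Zm, Matrix.mul_apply, Fin.sum_univ_two, Matrix.smul_apply, -mul_eq_zero]
        linear_combination (c*(zeta 3^2 - zeta 3)) * hsum
    rw [key, mul_nonsing_inv_cancel_right _ _ hdet]
  · have hM3 : (!![0, zeta 3; -(zeta 3 ^ 2), -1] : Matrix (Fin 2) (Fin 2) ℂ) ^ 3 = 1 := by
      ext i j
      fin_cases i <;> fin_cases j
      · simp [pow_succ, Matrix.mul_apply, Fin.sum_univ_two, Matrix.one_apply, -mul_eq_zero]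
        linear_combination (zeta 3 - 1) * hsum
      · simp [pow_succ, Matrix.mul_apply, Fin.sum_univ_two, Matrix.one_apply, -mul_eq_zero]
        linear_combination (-zeta 3^2 + zeta 3) * hsum
      · simp [pow_succ, Matrix.mul_apply, Fin.sum_univ_two, Matrix.one_apply, -mul_eq_zero]
        linear_combination (zeta 3^3 - zeta 3^2) * hsum - 2*zeta 3^2 * h3
      · simp [pow_succ, Matrix.mul_apply, Fin.sum_univ_two, Matrix.one_apply, -mul_eq_zero]
        linear_combination (2*zeta 3 - 2) * hsum
    have hc1 : c ^ 3 ^ k = 1 := by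
      rw [hc, ← pow_mul, mul_comm, pow_mul, zeta_pow_self (by positivity), one_pow]
    rw [Zm, smul_pow, hc1, one_smul]
    have h3k : 3 ^ k = 3 * 3 ^ (k - 1) := by
      rw [← pow_succ']
      congr 1
      omega
    rw [h3k, pow_mul, hM3, one_pow]
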